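/- Let p ≥ 3 be a prime. There is a unique F_p-algebra homomorphism θ: Θ → R with θ(u) = u, θ(μ) = κ^p, θ(a_i) = u·δ·κ^i for 0 ≤ i ≤ p−1 and θ(b_j) = u·κ^j for 1 ≤ j ≤ p−1. Its image is the F_p-subspace F_p[κ^p] + u·R, and this sum is direct (here F_p[κ^p] is the subalgebra of R generated by κ^p and u·R is the ideal of R generated by u). Its kernel is the free F_p[μ]-submodule of Θ generated by u^{p−2}·a_{p−1}; that is, the elements μ^m·u^{p−2}·a_{p−1} (m ≥ 0) are F_p-linearly independent in Θ and span the kernel of θ. -/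

import Mathlib

noncomputable section

/-- Generators of Ausoni's algebra `Θ`: `u`, `μ`, `a_0, …, a_{p-1}` and
`b_0, …, b_{p-1}` (with `b_0` identified with `u` by a relation). -/
inductive ThetaGen (p : ℕ) : Type
  | u : ThetaGen p
  | mu : ThetaGen p
  | a : Fin p → ThetaGen p
  | b : Fin p → ThetaGen p

open MvPolynomial in
/-- The defining relations of Ausoni's algebra `Θ`. -/
def thetaRels (p : ℕ) [NeZero p] : Set (MvPolynomial (ThetaGen p) (ZMod p)) :=
  {q | -- the convention b_0 = u
       q = X (ThetaGen.b 0) - X ThetaGen.u ∨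
       -- u^{p-1} = 0
       q = X (ThetaGen.u) ^ (p - 1) ∨
       -- u^{p-2}·a_i = 0 for 0 ≤ i ≤ p-2
       (∃ i : Fin p, (i : ℕ) ≤ p - 2 ∧ q = X ThetaGen.u ^ (p - 2) * X (ThetaGen.a i)) ∨
       -- u^{p-2}·b_j = 0 for 1 ≤ j ≤ p-1
       (∃ j : Fin p, 1 ≤ (j : ℕ) ∧ q = X ThetaGen.u ^ (p - 2) * X (ThetaGen.b j)) ∨
       -- b_i·b_j = u·b_{i+j} for 1 ≤ i, j ≤ p-1 with i + j ≤ p-1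
       (∃ i j k : Fin p, 1 ≤ (i : ℕ) ∧ 1 ≤ (j : ℕ) ∧ (i : ℕ) + (j : ℕ) ≤ p - 1 ∧
          (k : ℕ) = (i : ℕ) + (j : ℕ) ∧
          q = X (ThetaGen.b i) * X (ThetaGen.b j) - X ThetaGen.u * X (ThetaGen.b k)) ∨
       -- a_i·b_j = u·a_{i+j} for 1 ≤ j ≤ p-1 with i + j ≤ p-1
       (∃ i j k : Fin p, 1 ≤ (j : ℕ) ∧ (i : ℕ) + (j : ℕ) ≤ p - 1 ∧
          (k : ℕ) = (i : ℕ) + (j : ℕ) ∧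
          q = X (ThetaGen.a i) * X (ThetaGen.b j) - X ThetaGen.u * X (ThetaGen.a k)) ∨
       -- b_i·b_j = u·μ·b_{i+j-p} for 1 ≤ i, j ≤ p-1 with i + j ≥ p
       (∃ i j k : Fin p, 1 ≤ (i : ℕ) ∧ 1 ≤ (j : ℕ) ∧ p ≤ (i : ℕ) + (j : ℕ) ∧
          (k : ℕ) + p = (i : ℕ) + (j : ℕ) ∧
          q = X (ThetaGen.b i) * X (ThetaGen.b j) -
              X ThetaGen.u * X ThetaGen.mu * X (ThetaGen.b k)) ∨
       -- a_i·b_j = u·μ·a_{i+j-p} for 1 ≤ j ≤ p-1 with i + j ≥ p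
       (∃ i j k : Fin p, 1 ≤ (j : ℕ) ∧ p ≤ (i : ℕ) + (j : ℕ) ∧
          (k : ℕ) + p = (i : ℕ) + (j : ℕ) ∧
          q = X (ThetaGen.a i) * X (ThetaGen.b j) -
              X ThetaGen.u * X ThetaGen.mu * X (ThetaGen.a k)) ∨
       -- a_i·a_j = 0
       (∃ i j : Fin p, q = X (ThetaGen.a i) * X (ThetaGen.a j)) }

/-- Ausoni's commutative `F_p`-algebra `Θ`, presented by generators and relations. -/
def Theta (p : ℕ) [NeZero p] : Type :=
  MvPolynomial (ThetaGen p) (ZMod p) ⧸ Ideal.span (thetaRels p)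

noncomputable instance (p : ℕ) [NeZero p] : CommRing (Theta p) :=
  Ideal.Quotient.commRing _

noncomputable instance (p : ℕ) [NeZero p] : Algebra (ZMod p) (Theta p) :=
  Ideal.Quotient.algebra _

/-- The generator `u` of `Θ`. -/
def thetaU (p : ℕ) [NeZero p] : Theta p :=
  Ideal.Quotient.mk _ (MvPolynomial.X ThetaGen.u)

/-- The generator `μ` of `Θ`. -/
def thetaMu (p : ℕ) [NeZero p] : Theta p :=
  Ideal.Quotient.mk _ (MvPolynomial.X ThetaGen.mu)

/-- The generators `a_i` of `Θ`. -/
def thetaA (p : ℕ) [NeZero p] (i : Fin p) : Theta p :=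
  Ideal.Quotient.mk _ (MvPolynomial.X (ThetaGen.a i))

/-- The generators `b_j` of `Θ`. -/
def thetaB (p : ℕ) [NeZero p] (j : Fin p) : Theta p :=
  Ideal.Quotient.mk _ (MvPolynomial.X (ThetaGen.b j))

/-- The ideal `(u^{p-1}, δ²)` in `F_p[u, δ, κ]`, where `u = X 0`, `δ = X 1`, `κ = X 2`. -/
def kuRelIdeal (p : ℕ) : Ideal (MvPolynomial (Fin 3) (ZMod p)) :=
  Ideal.span {(MvPolynomial.X 0 : MvPolynomial (Fin 3) (ZMod p)) ^ (p - 1),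
    (MvPolynomial.X 1 : MvPolynomial (Fin 3) (ZMod p)) ^ 2}

/-- The commutative `F_p`-algebra `R = (F_p[u]/(u^{p-1})) ⊗ Λ(δ) ⊗ F_p[κ]`,
realized as `F_p[u, δ, κ]/(u^{p-1}, δ²)`. -/
def KuAlg (p : ℕ) : Type := MvPolynomial (Fin 3) (ZMod p) ⧸ kuRelIdeal p

noncomputable instance (p : ℕ) : CommRing (KuAlg p) := Ideal.Quotient.commRing _

noncomputable instance (p : ℕ) : Algebra (ZMod p) (KuAlg p) := Ideal.Quotient.algebra _

/-- The element `u` of `R`. -/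
def kuU (p : ℕ) : KuAlg p := Ideal.Quotient.mk _ (MvPolynomial.X 0)

/-- The element `δ` of `R`. -/
def kuD (p : ℕ) : KuAlg p := Ideal.Quotient.mk _ (MvPolynomial.X 1)

/-- The element `κ` of `R`. -/
def kuK (p : ℕ) : KuAlg p := Ideal.Quotient.mk _ (MvPolynomial.X 2)

/-- The conditions prescribing the values of `θ` on the generators of `Θ`:
`θ(u) = u`, `θ(μ) = κ^p`, `θ(a_i) = u·δ·κ^i` for `0 ≤ i ≤ p-1` and
`θ(b_j) = u·κ^j` for `1 ≤ j ≤ p-1`. -/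
def thetaValues (p : ℕ) [NeZero p] (θ : Theta p →ₐ[ZMod p] KuAlg p) : Prop :=
  θ (thetaU p) = kuU p ∧
  θ (thetaMu p) = kuK p ^ p ∧
  (∀ i : Fin p, θ (thetaA p i) = kuU p * kuD p * kuK p ^ (i : ℕ)) ∧
  (∀ j : Fin p, 1 ≤ (j : ℕ) → θ (thetaB p j) = kuU p * kuK p ^ (j : ℕ))


set_option maxHeartbeats 1000000
set_option linter.unusedSectionVars false
set_option synthInstance.maxHeartbeats 400000

namespace S5

open MvPolynomial

variable (p : ℕ) [NeZero p]

/-! ### Relations in `Theta` -/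

lemma mk_rel {q : MvPolynomial (ThetaGen p) (ZMod p)} (h : q ∈ thetaRels p) :
    Ideal.Quotient.mk (Ideal.span (thetaRels p)) q = 0 :=
  Ideal.Quotient.eq_zero_iff_mem.mpr (Ideal.subset_span h)

lemma theta_b0 : thetaB p 0 = thetaU p := by
  have h := mk_rel p (q := X (ThetaGen.b 0) - X ThetaGen.u) (Or.inl rfl)
  rw [map_sub, sub_eq_zero] at h
  exact h

lemma theta_u_pow : thetaU p ^ (p - 1) = 0 := by
  have h := mk_rel p (q := X ThetaGen.u ^ (p - 1)) (Or.inr (Or.inl rfl))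
  rw [map_pow] at h; exact h

lemma theta_ua (i : Fin p) (hi : (i : ℕ) ≤ p - 2) :
    thetaU p ^ (p - 2) * thetaA p i = 0 := by
  have h := mk_rel p (q := X ThetaGen.u ^ (p - 2) * X (ThetaGen.a i))
    (Or.inr (Or.inr (Or.inl ⟨i, hi, rfl⟩)))
  rw [map_mul, map_pow] at h; exact h

lemma theta_ub (j : Fin p) (hj : 1 ≤ (j : ℕ)) :
    thetaU p ^ (p - 2) * thetaB p j = 0 := by
  have h := mk_rel p (q := X ThetaGen.u ^ (p - 2) * X (ThetaGen.b j))
    (Or.inr (Or.inr (Or.inr (Or.inl ⟨j, hj, rfl⟩))))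
  rw [map_mul, map_pow] at h; exact h

lemma theta_bb_low (i j k : Fin p) (hi : 1 ≤ (i : ℕ)) (hj : 1 ≤ (j : ℕ))
    (hs : (i : ℕ) + (j : ℕ) ≤ p - 1) (hk : (k : ℕ) = (i : ℕ) + (j : ℕ)) :
    thetaB p i * thetaB p j = thetaU p * thetaB p k := by
  have h := mk_rel p
    (q := X (ThetaGen.b i) * X (ThetaGen.b j) - X ThetaGen.u * X (ThetaGen.b k))
    (Or.inr (Or.inr (Or.inr (Or.inr (Or.inl ⟨i, j, k, hi, hj, hs, hk, rfl⟩)))))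
  rw [map_sub, map_mul, map_mul, sub_eq_zero] at h; exact h

lemma theta_ab_low (i j k : Fin p) (hj : 1 ≤ (j : ℕ))
    (hs : (i : ℕ) + (j : ℕ) ≤ p - 1) (hk : (k : ℕ) = (i : ℕ) + (j : ℕ)) :
    thetaA p i * thetaB p j = thetaU p * thetaA p k := by
  have h := mk_rel p
    (q := X (ThetaGen.a i) * X (ThetaGen.b j) - X ThetaGen.u * X (ThetaGen.a k))
    (Or.inr (Or.inr (Or.inr (Or.inr (Or.inr (Or.inl ⟨i, j, k, hj, hs, hk, rfl⟩))))))
  rw [map_sub, map_mul, map_mul, sub_eq_zero] at h; exact h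

lemma theta_bb_high (i j k : Fin p) (hi : 1 ≤ (i : ℕ)) (hj : 1 ≤ (j : ℕ))
    (hs : p ≤ (i : ℕ) + (j : ℕ)) (hk : (k : ℕ) + p = (i : ℕ) + (j : ℕ)) :
    thetaB p i * thetaB p j = thetaU p * thetaMu p * thetaB p k := by
  have h := mk_rel p
    (q := X (ThetaGen.b i) * X (ThetaGen.b j) -
      X ThetaGen.u * X ThetaGen.mu * X (ThetaGen.b k))
    (Or.inr (Or.inr (Or.inr (Or.inr (Or.inr (Or.inr
      (Or.inl ⟨i, j, k, hi, hj, hs, hk, rfl⟩)))))))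
  rw [map_sub, map_mul, map_mul, map_mul, sub_eq_zero] at h; exact h

lemma theta_ab_high (i j k : Fin p) (hj : 1 ≤ (j : ℕ))
    (hs : p ≤ (i : ℕ) + (j : ℕ)) (hk : (k : ℕ) + p = (i : ℕ) + (j : ℕ)) :
    thetaA p i * thetaB p j = thetaU p * thetaMu p * thetaA p k := by
  have h := mk_rel p
    (q := X (ThetaGen.a i) * X (ThetaGen.b j) -
      X ThetaGen.u * X ThetaGen.mu * X (ThetaGen.a k))
    (Or.inr (Or.inr (Or.inr (Or.inr (Or.inr (Or.inr (Or.inr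
      (Or.inl ⟨i, j, k, hj, hs, hk, rfl⟩))))))))
  rw [map_sub, map_mul, map_mul, map_mul, sub_eq_zero] at h; exact h

lemma theta_aa (i j : Fin p) : thetaA p i * thetaA p j = 0 := by
  have h := mk_rel p (q := X (ThetaGen.a i) * X (ThetaGen.a j))
    (Or.inr (Or.inr (Or.inr (Or.inr (Or.inr (Or.inr (Or.inr (Or.inr ⟨i, j, rfl⟩))))))))
  rw [map_mul] at h; exact h

/-! ### Relations in `KuAlg` -/

lemma ku_u_pow : kuU p ^ (p - 1) = 0 := by
  have h : (Ideal.Quotient.mk (kuRelIdeal p)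
      ((X 0 : MvPolynomial (Fin 3) (ZMod p)) ^ (p - 1)) : KuAlg p) = 0 :=
    Ideal.Quotient.eq_zero_iff_mem.mpr (Ideal.subset_span (Or.inl rfl))
  rw [map_pow] at h; exact h

lemma ku_d_sq : kuD p ^ 2 = 0 := by
  have h : (Ideal.Quotient.mk (kuRelIdeal p)
      ((X 1 : MvPolynomial (Fin 3) (ZMod p)) ^ 2) : KuAlg p) = 0 :=
    Ideal.Quotient.eq_zero_iff_mem.mpr (Ideal.subset_span (Or.inr rfl))
  rw [map_pow] at h; exact h

/-! ### Monomial exponents on `Fin 3` -/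

/-- `expo a b c` is the exponent vector of `u^a δ^b κ^c`. -/
def expo (a b c : ℕ) : Fin 3 →₀ ℕ :=
  Finsupp.single 0 a + Finsupp.single 1 b + Finsupp.single 2 c

lemma expo_apply0 (a b c : ℕ) : expo a b c 0 = a := by
  simp [expo, Finsupp.single_apply]

lemma expo_apply1 (a b c : ℕ) : expo a b c 1 = b := by
  simp [expo, Finsupp.single_apply]

lemma expo_apply2 (a b c : ℕ) : expo a b c 2 = c := by
  simp [expo, Finsupp.single_apply]

lemma expo_inj {a b c a' b' c' : ℕ} (h : expo a b c = expo a' b' c') :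
    a = a' ∧ b = b' ∧ c = c' := by
  refine ⟨?_, ?_, ?_⟩
  · have := congrArg (fun f => f 0) h; simpa [expo_apply0] using this
  · have := congrArg (fun f => f 1) h; simpa [expo_apply1] using this
  · have := congrArg (fun f => f 2) h; simpa [expo_apply2] using this

lemma X_pow_mul_eq_monomial (a b c : ℕ) :
    (X 0 : MvPolynomial (Fin 3) (ZMod p)) ^ a * X 1 ^ b * X 2 ^ c =
      monomial (expo a b c) 1 := by
  rw [X_pow_eq_monomial, X_pow_eq_monomial, X_pow_eq_monomial,
    monomial_mul, monomial_mul, expo]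
  simp

/-! ### Coefficients and monomial independence in `KuAlg` -/

lemma kuRel_coeff {x : MvPolynomial (Fin 3) (ZMod p)} (hx : x ∈ kuRelIdeal p) :
    ∀ m : Fin 3 →₀ ℕ, m 0 < p - 1 → m 1 < 2 → coeff m x = 0 := by
  refine Submodule.span_induction ?_ ?_ ?_ ?_ hx
  · rintro x (rfl | rfl) m h0 h1
    · rw [X_pow_eq_monomial, coeff_monomial]
      have : Finsupp.single (0 : Fin 3) (p - 1) ≠ m := by
        intro h; rw [← h, Finsupp.single_eq_same] at h0; omega
      rw [if_neg this]
    · rw [X_pow_eq_monomial, coeff_monomial]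
      have : Finsupp.single (1 : Fin 3) 2 ≠ m := by
        intro h; rw [← h, Finsupp.single_eq_same] at h1; omega
      rw [if_neg this]
  · intro m _ _; simp
  · intro x y _ _ hx hy m h0 h1
    rw [coeff_add, hx m h0 h1, hy m h0 h1, add_zero]
  · intro a x _ hx m h0 h1
    rw [smul_eq_mul, coeff_mul]
    refine Finset.sum_eq_zero fun q hq => ?_
    rw [Finset.HasAntidiagonal.mem_antidiagonal] at hq
    have h20 : q.2 0 ≤ m 0 := by
      conv_rhs => rw [← hq]
      simp
    have h21 : q.2 1 ≤ m 1 := by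
      conv_rhs => rw [← hq]
      simp
    rw [hx q.2 (lt_of_le_of_lt h20 h0) (lt_of_le_of_lt h21 h1), mul_zero]

lemma ku_monomial_linearIndependent {ι : Type} (E : ι → (Fin 3 →₀ ℕ))
    (hinj : Function.Injective E) (h0 : ∀ i, E i 0 < p - 1) (h1 : ∀ i, E i 1 < 2) :
    LinearIndependent (ZMod p)
      (fun i => (Ideal.Quotient.mk (kuRelIdeal p) (monomial (E i) 1) : KuAlg p)) := by
  rw [linearIndependent_iff]
  intro c hc
  set q : MvPolynomial (Fin 3) (ZMod p) :=
    Finsupp.linearCombination (ZMod p) (fun i => monomial (E i) (1 : ZMod p)) c with hq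
  have hmkq : (Ideal.Quotient.mkₐ (ZMod p) (kuRelIdeal p)) q = 0 := by
    rw [hq, show ⇑(Ideal.Quotient.mkₐ (ZMod p) (kuRelIdeal p)) = ⇑(Ideal.Quotient.mkₐ (ZMod p) (kuRelIdeal p)).toLinearMap from rfl, Finsupp.apply_linearCombination]
    exact hc
  have hqmem : q ∈ kuRelIdeal p := Ideal.Quotient.eq_zero_iff_mem.mp hmkq
  ext j
  have hco : coeff (E j) q = c j := by
    rw [hq, Finsupp.linearCombination_apply, Finsupp.sum, coeff_sum]
    rw [Finset.sum_eq_single j]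
    · rw [smul_monomial, coeff_monomial, if_pos rfl, smul_eq_mul, mul_one]
    · intro i _ hij
      rw [smul_monomial, coeff_monomial, if_neg (fun h => hij (hinj h))]
    · intro hj
      rw [Finsupp.notMem_support_iff.mp hj, zero_smul, coeff_zero]
  rw [← hco, kuRel_coeff p hqmem (E j) (h0 j) (h1 j), Finsupp.coe_zero, Pi.zero_apply]

/-! ### The grading morphism `Phi` detecting the kernel generators -/

def phiVal : ThetaGen p → MvPolynomial (Fin 3) (ZMod p)
  | ThetaGen.u => X 1
  | ThetaGen.mu => X 2 ^ p
  | ThetaGen.a i => X 0 * X 1 * X 2 ^ (i : ℕ)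
  | ThetaGen.b j => X 1 * X 2 ^ (j : ℕ)

def Phi : MvPolynomial (ThetaGen p) (ZMod p) →ₐ[ZMod p] MvPolynomial (Fin 3) (ZMod p) :=
  aeval (phiVal p)

/-- exponents that can occur in the image of `Phi`. -/
def GoodExp (m : Fin 3 →₀ ℕ) : Prop := m 0 ≤ m 1 ∧ (m 1 = 0 → m 2 % p = 0)

lemma phi_X_u : Phi p (X ThetaGen.u) = monomial (expo 0 1 0) 1 := by
  rw [Phi, aeval_X]
  have h := X_pow_mul_eq_monomial p 0 1 0
  simpa [phiVal] using h.symm.symm ▸ (by simpa using h)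

lemma phi_X_mu : Phi p (X ThetaGen.mu) = monomial (expo 0 0 p) 1 := by
  rw [Phi, aeval_X]
  have h := X_pow_mul_eq_monomial p 0 0 p
  simpa [phiVal] using h

lemma phi_X_a (i : Fin p) :
    Phi p (X (ThetaGen.a i)) = monomial (expo 1 1 (i : ℕ)) 1 := by
  rw [Phi, aeval_X]
  have h := X_pow_mul_eq_monomial p 1 1 (i : ℕ)
  simpa [phiVal] using h

lemma phi_X_b (j : Fin p) :
    Phi p (X (ThetaGen.b j)) = monomial (expo 0 1 (j : ℕ)) 1 := by
  rw [Phi, aeval_X]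
  have h := X_pow_mul_eq_monomial p 0 1 (j : ℕ)
  simpa [phiVal] using h

lemma phi_coeff_good (f : MvPolynomial (ThetaGen p) (ZMod p)) :
    ∀ m : Fin 3 →₀ ℕ, ¬ GoodExp p m → coeff m (Phi p f) = 0 := by
  induction f using MvPolynomial.induction_on with
  | C a =>
    intro m hm
    have hm0 : m ≠ 0 := by
      rintro rfl
      exact hm ⟨le_refl _, fun _ => by simp⟩
    have : Phi p (C a) = C a := by simp [Phi]
    rw [this, coeff_C, if_neg (fun h => hm0 h.symm)]
  | add f g hf hg =>
    intro m hm
    rw [map_add, coeff_add, hf m hm, hg m hm, add_zero]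
  | mul_X f v hf =>
    intro m hm
    rw [map_mul]
    have key : ∀ a b c : ℕ,
        (GoodExp p (m - expo a b c) → a ≤ b ∧ (b = 0 → c % p = 0) → expo a b c ≤ m → GoodExp p m) := by
      intro a b c hgood ⟨hab, hbc⟩ hle
      have l0 : a ≤ m 0 := by have := Finsupp.le_def.mp hle 0; rwa [expo_apply0] at this
      have l1 : b ≤ m 1 := by have := Finsupp.le_def.mp hle 1; rwa [expo_apply1] at this
      have l2 : c ≤ m 2 := by have := Finsupp.le_def.mp hle 2; rwa [expo_apply2] at this
      obtain ⟨g1, g2⟩ := hgood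
      rw [Finsupp.tsub_apply, Finsupp.tsub_apply, expo_apply0, expo_apply1] at g1
      rw [Finsupp.tsub_apply, Finsupp.tsub_apply, expo_apply1, expo_apply2] at g2
      constructor
      · omega
      · intro h1
        have hb0 : b = 0 := by omega
        have hc0 : c % p = 0 := hbc hb0
        have h2 : (m 2 - c) % p = 0 := g2 (by omega)
        obtain ⟨s, hs⟩ := Nat.dvd_of_mod_eq_zero hc0
        obtain ⟨t, ht⟩ := Nat.dvd_of_mod_eq_zero h2
        have : m 2 = p * t + p * s := by omega
        rw [this, ← Nat.mul_add, Nat.mul_mod_right]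
    -- reduce to the four generator shapes
    have main : ∀ a b c : ℕ, a ≤ b → (b = 0 → c % p = 0) →
        coeff m (Phi p f * monomial (expo a b c) 1) = 0 := by
      intro a b c hab hbc
      rw [coeff_mul_monomial']
      split_ifs with h
      · rw [mul_one]
        exact hf _ (fun hgood => hm (key a b c hgood ⟨hab, hbc⟩ h))
      · rfl
    cases v with
    | u => rw [phi_X_u]; exact main 0 1 0 (by omega) (by omega)
    | mu => rw [phi_X_mu]; exact main 0 0 p (le_refl _) (fun _ => Nat.mul_mod_right p 1 ▸ by simp)
    | a i => rw [phi_X_a]; exact main 1 1 (i : ℕ) (le_refl _) (by omega)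
    | b j => rw [phi_X_b]; exact main 0 1 (j : ℕ) (by omega) (by omega)

lemma expo_sub (a b c a' b' c' : ℕ) :
    expo a b c - expo a' b' c' = expo (a - a') (b - b') (c - c') := by
  ext i
  fin_cases i <;> simp [expo, Finsupp.tsub_apply, Finsupp.single_apply]

lemma expo_le_iff (a b c a' b' c' : ℕ) :
    expo a b c ≤ expo a' b' c' ↔ a ≤ a' ∧ b ≤ b' ∧ c ≤ c' := by
  constructor
  · intro h
    refine ⟨?_, ?_, ?_⟩
    · have := Finsupp.le_def.mp h 0; rwa [expo_apply0, expo_apply0] at this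
    · have := Finsupp.le_def.mp h 1; rwa [expo_apply1, expo_apply1] at this
    · have := Finsupp.le_def.mp h 2; rwa [expo_apply2, expo_apply2] at this
  · rintro ⟨h0, h1, h2⟩
    rw [Finsupp.le_def]
    intro i
    fin_cases i <;> simp [expo, Finsupp.single_apply] <;> omega

lemma good_expo_iff (a b c : ℕ) :
    GoodExp p (expo a b c) ↔ (a ≤ b ∧ (b = 0 → c % p = 0)) := by
  rw [GoodExp, expo_apply0, expo_apply1, expo_apply2]

lemma coeff_phi_mul_mono (n a b c : ℕ) (f : MvPolynomial (ThetaGen p) (ZMod p))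
    (hbad : a ≤ 1 → b ≤ p - 1 → c ≤ p * n + (p - 1) →
        ¬ ((1 - a) ≤ (p - 1 - b) ∧
           ((p - 1 - b) = 0 → (p * n + (p - 1) - c) % p = 0))) :
    coeff (expo 1 (p - 1) (p * n + (p - 1))) (Phi p f * monomial (expo a b c) 1) = 0 := by
  rw [coeff_mul_monomial']
  split_ifs with h
  · rw [mul_one]
    obtain ⟨h0, h1, h2⟩ := (expo_le_iff a b c 1 (p - 1) (p * n + (p - 1))).mp h
    rw [expo_sub]
    refine phi_coeff_good p f _ ?_
    rw [good_expo_iff]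
    exact hbad h0 h1 h2
  · rfl

lemma mod_p_aux (n r : ℕ) (h1 : 1 ≤ r) (h2 : r ≤ p - 1) (h3 : 3 ≤ p) :
    (p * n + r) % p ≠ 0 := by
  rw [Nat.mul_add_mod, Nat.mod_eq_of_lt (by omega)]
  omega

lemma phi_rel_coeff (hp3 : 3 ≤ p) (n : ℕ) {x : MvPolynomial (ThetaGen p) (ZMod p)}
    (hx : x ∈ Ideal.span (thetaRels p)) :
    ∀ f, coeff (expo 1 (p - 1) (p * n + (p - 1))) (Phi p (f * x)) = 0 := by
  refine Submodule.span_induction ?_ ?_ ?_ ?_ hx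
  · rintro r hr f
    rcases hr with rfl | rfl | ⟨i, hi, rfl⟩ | ⟨j, hj, rfl⟩ | ⟨i, j, k, hi, hj, hs, hk, rfl⟩ |
      ⟨i, j, k, hj, hs, hk, rfl⟩ | ⟨i, j, k, hi, hj, hs, hk, rfl⟩ |
      ⟨i, j, k, hj, hs, hk, rfl⟩ | ⟨i, j, rfl⟩
    · -- b_0 = u
      have hphi : Phi p (X (ThetaGen.b 0) - X ThetaGen.u : MvPolynomial (ThetaGen p) (ZMod p)) = 0 := by
        simp only [map_sub, Phi, aeval_X, phiVal]
        rw [Fin.val_zero, pow_zero, mul_one, sub_self]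
      rw [map_mul, hphi, mul_zero, coeff_zero]
    · -- u^{p-1}
      have hphi : Phi p (X ThetaGen.u ^ (p - 1) : MvPolynomial (ThetaGen p) (ZMod p)) =
          monomial (expo 0 (p - 1) 0) 1 := by
        simp only [map_pow, Phi, aeval_X, phiVal]
        rw [← X_pow_mul_eq_monomial]
        ring
      rw [map_mul, hphi]
      exact coeff_phi_mul_mono p n 0 (p - 1) 0 f (by intro _ _ _; omega)
    · -- u^{p-2} a_i
      have hphi : Phi p (X ThetaGen.u ^ (p - 2) * X (ThetaGen.a i) :
          MvPolynomial (ThetaGen p) (ZMod p)) = monomial (expo 1 (p - 1) (i : ℕ)) 1 := by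
        simp only [map_mul, map_pow, Phi, aeval_X, phiVal]
        rw [← X_pow_mul_eq_monomial, show p - 1 = (p - 2) + 1 from by omega]
        ring
      rw [map_mul, hphi]
      refine coeff_phi_mul_mono p n 1 (p - 1) (i : ℕ) f ?_
      intro _ _ hc
      rintro ⟨-, h2⟩
      have := h2 (by omega)
      rw [show p * n + (p - 1) - (i : ℕ) = p * n + (p - 1 - (i : ℕ)) from by omega] at this
      exact mod_p_aux p n (p - 1 - (i : ℕ)) (by omega) (by omega) hp3 this
    · -- u^{p-2} b_j
      have hphi : Phi p (X ThetaGen.u ^ (p - 2) * X (ThetaGen.b j) :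
          MvPolynomial (ThetaGen p) (ZMod p)) = monomial (expo 0 (p - 1) (j : ℕ)) 1 := by
        simp only [map_mul, map_pow, Phi, aeval_X, phiVal]
        rw [← X_pow_mul_eq_monomial, show p - 1 = (p - 2) + 1 from by omega]
        ring
      rw [map_mul, hphi]
      exact coeff_phi_mul_mono p n 0 (p - 1) (j : ℕ) f (by intro _ _ _; rintro ⟨h1, -⟩; omega)
    · -- b b low
      have hphi : Phi p (X (ThetaGen.b i) * X (ThetaGen.b j) -
          X ThetaGen.u * X (ThetaGen.b k) : MvPolynomial (ThetaGen p) (ZMod p)) = 0 := by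
        simp only [map_sub, map_mul, Phi, aeval_X, phiVal]
        rw [hk, pow_add]
        ring
      rw [map_mul, hphi, mul_zero, coeff_zero]
    · -- a b low
      have hphi : Phi p (X (ThetaGen.a i) * X (ThetaGen.b j) -
          X ThetaGen.u * X (ThetaGen.a k) : MvPolynomial (ThetaGen p) (ZMod p)) = 0 := by
        simp only [map_sub, map_mul, Phi, aeval_X, phiVal]
        rw [hk, pow_add]
        ring
      rw [map_mul, hphi, mul_zero, coeff_zero]
    · -- b b high
      have hphi : Phi p (X (ThetaGen.b i) * X (ThetaGen.b j) -
          X ThetaGen.u * X ThetaGen.mu * X (ThetaGen.b k) :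
          MvPolynomial (ThetaGen p) (ZMod p)) = 0 := by
        simp only [map_sub, map_mul, Phi, aeval_X, phiVal]
        rw [sub_eq_zero]
        calc X 1 * X 2 ^ (i : ℕ) * (X 1 * X 2 ^ (j : ℕ))
            = (X 1 : MvPolynomial (Fin 3) (ZMod p)) ^ 2 * X 2 ^ ((i : ℕ) + (j : ℕ)) := by
              rw [pow_add]; ring
          _ = (X 1 : MvPolynomial (Fin 3) (ZMod p)) ^ 2 * X 2 ^ ((k : ℕ) + p) := by rw [hk]
          _ = X 1 * X 2 ^ p * (X 1 * X 2 ^ (k : ℕ)) := by rw [pow_add]; ring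
      rw [map_mul, hphi, mul_zero, coeff_zero]
    · -- a b high
      have hphi : Phi p (X (ThetaGen.a i) * X (ThetaGen.b j) -
          X ThetaGen.u * X ThetaGen.mu * X (ThetaGen.a k) :
          MvPolynomial (ThetaGen p) (ZMod p)) = 0 := by
        simp only [map_sub, map_mul, Phi, aeval_X, phiVal]
        rw [sub_eq_zero]
        calc X 0 * X 1 * X 2 ^ (i : ℕ) * (X 1 * X 2 ^ (j : ℕ))
            = X 0 * (X 1 : MvPolynomial (Fin 3) (ZMod p)) ^ 2 * X 2 ^ ((i : ℕ) + (j : ℕ)) := by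
              rw [pow_add]; ring
          _ = X 0 * (X 1 : MvPolynomial (Fin 3) (ZMod p)) ^ 2 * X 2 ^ ((k : ℕ) + p) := by rw [hk]
          _ = X 1 * X 2 ^ p * (X 0 * X 1 * X 2 ^ (k : ℕ)) := by rw [pow_add]; ring
      rw [map_mul, hphi, mul_zero, coeff_zero]
    · -- a a
      have hphi : Phi p (X (ThetaGen.a i) * X (ThetaGen.a j) :
          MvPolynomial (ThetaGen p) (ZMod p)) = monomial (expo 2 2 ((i : ℕ) + (j : ℕ))) 1 := by
        simp only [map_mul, Phi, aeval_X, phiVal]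
        rw [← X_pow_mul_eq_monomial, pow_add]
        ring
      rw [map_mul, hphi]
      exact coeff_phi_mul_mono p n 2 2 _ f (by intro h _ _; omega)
  · intro f
    rw [mul_zero, map_zero, coeff_zero]
  · intro x y _ _ hx hy f
    rw [mul_add, map_add, coeff_add, hx f, hy f, add_zero]
  · intro a x _ hx f
    rw [smul_eq_mul, show f * (a * x) = (f * a) * x from by ring]
    exact hx (f * a)

/-! ### Linear independence of the kernel family in `Theta` -/

lemma coeff_linearCombination_monomial {σ' : Type} [DecidableEq σ'] {ι : Type} (E : ι → (σ' →₀ ℕ))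
    (hinj : Function.Injective E) (c : ι →₀ ZMod p) (j : ι) :
    coeff (E j) (Finsupp.linearCombination (ZMod p)
      (fun i => (monomial (E i) (1 : ZMod p) : MvPolynomial σ' (ZMod p))) c) = c j := by
  rw [Finsupp.linearCombination_apply, Finsupp.sum, coeff_sum]
  rw [Finset.sum_eq_single j]
  · rw [smul_monomial, coeff_monomial, if_pos rfl, smul_eq_mul, mul_one]
  · intro i _ hij
    rw [smul_monomial, coeff_monomial, if_neg (fun h => hij (hinj h))]
  · intro hj
    rw [Finsupp.notMem_support_iff.mp hj, zero_smul, coeff_zero]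

/-- representative of the kernel generators. -/
def kerRep (m : ℕ) : MvPolynomial (ThetaGen p) (ZMod p) :=
  X ThetaGen.mu ^ m * X ThetaGen.u ^ (p - 2) *
    X (ThetaGen.a ⟨p - 1, Nat.sub_lt (NeZero.pos p) Nat.one_pos⟩)

/-- the kernel family in `Theta`. -/
def kerF (m : ℕ) : Theta p :=
  thetaMu p ^ m * thetaU p ^ (p - 2) *
    thetaA p ⟨p - 1, Nat.sub_lt (NeZero.pos p) Nat.one_pos⟩

lemma mk_kerRep (m : ℕ) :
    Ideal.Quotient.mkₐ (ZMod p) (Ideal.span (thetaRels p)) (kerRep p m) = kerF p m := by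
  rw [kerRep, kerF, map_mul, map_mul, map_pow, map_pow]
  rfl

lemma phi_kerRep (hp3 : 3 ≤ p) (m : ℕ) :
    Phi p (kerRep p m) = monomial (expo 1 (p - 1) (p * m + (p - 1))) 1 := by
  rw [kerRep]
  simp only [map_mul, map_pow, Phi, aeval_X, phiVal]
  rw [← X_pow_mul_eq_monomial, show p - 1 = (p - 2) + 1 from by omega]
  ring

lemma kerExp_inj (hp3 : 3 ≤ p) :
    Function.Injective (fun m : ℕ => expo 1 (p - 1) (p * m + (p - 1))) := by
  intro m n h
  obtain ⟨-, -, h2⟩ := expo_inj h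
  have hp0 : 0 < p := by omega
  exact Nat.eq_of_mul_eq_mul_left hp0 (by omega)

lemma kerF_linearIndependent (hp3 : 3 ≤ p) : LinearIndependent (ZMod p) (kerF p) := by
  suffices H : ∀ l, Finsupp.linearCombination (ZMod p) (kerF p) l = 0 → l = 0 by
    intro l₁ l₂ h
    exact sub_eq_zero.mp (H (l₁ - l₂) (by rw [map_sub, h, sub_self]))
  intro c hc
  set q : MvPolynomial (ThetaGen p) (ZMod p) :=
    Finsupp.linearCombination (ZMod p) (kerRep p) c with hq
  have hmkq : Ideal.Quotient.mkₐ (ZMod p) (Ideal.span (thetaRels p)) q = 0 := by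
    rw [hq, show ⇑(Ideal.Quotient.mkₐ (ZMod p) (Ideal.span (thetaRels p))) =
      ⇑(Ideal.Quotient.mkₐ (ZMod p) (Ideal.span (thetaRels p))).toLinearMap from rfl,
      Finsupp.apply_linearCombination]
    have hfun : (⇑(Ideal.Quotient.mkₐ (ZMod p) (Ideal.span (thetaRels p))).toLinearMap ∘
        kerRep p) = kerF p := funext (mk_kerRep p)
    rw [hfun]
    exact hc
  have hqmem : q ∈ Ideal.span (thetaRels p) := Ideal.Quotient.eq_zero_iff_mem.mp hmkq
  ext n
  have h2 : coeff (expo 1 (p - 1) (p * n + (p - 1))) (Phi p q) = 0 := by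
    have := phi_rel_coeff p hp3 n hqmem 1
    rwa [one_mul] at this
  have h1 : coeff (expo 1 (p - 1) (p * n + (p - 1))) (Phi p q) = c n := by
    rw [hq, show ⇑(Phi p) = ⇑(Phi p).toLinearMap from rfl, Finsupp.apply_linearCombination]
    have : (⇑(Phi p).toLinearMap ∘ kerRep p) =
        fun m => (monomial (expo 1 (p - 1) (p * m + (p - 1))) (1 : ZMod p)) := by
      funext m
      exact phi_kerRep p hp3 m
    rw [this]
    exact coeff_linearCombination_monomial p _ (kerExp_inj p hp3) c n
  rw [h2] at h1
  rw [Finsupp.coe_zero, Pi.zero_apply, ← h1]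

/-! ### A spanning family for `Theta` -/

def RIdx : Type :=
  (ℕ × Fin (p - 1)) ⊕ (ℕ × Fin (p - 2) × Fin p) ⊕ (ℕ × Fin (p - 2) × Fin (p - 1))

def restV : RIdx p → Theta p
  | Sum.inl (m, k) => thetaMu p ^ m * thetaU p ^ (k : ℕ)
  | Sum.inr (Sum.inl (m, k, i)) => thetaMu p ^ m * thetaU p ^ (k : ℕ) * thetaA p i
  | Sum.inr (Sum.inr (m, k, j)) =>
      thetaMu p ^ m * thetaU p ^ (k : ℕ) * thetaB p ⟨(j : ℕ) + 1, Nat.add_lt_of_lt_sub j.isLt⟩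

def SpanS : Submodule (ZMod p) (Theta p) :=
  Submodule.span (ZMod p) (Set.range (kerF p) ∪ Set.range (restV p))

lemma theta_u_pow_zero (k : ℕ) (hk : p - 1 ≤ k) : thetaU p ^ k = 0 := by
  rw [show k = (p - 1) + (k - (p - 1)) from by omega, pow_add, theta_u_pow, zero_mul]

lemma mem_pure (hp3 : 3 ≤ p) (m k : ℕ) : thetaMu p ^ m * thetaU p ^ k ∈ SpanS p := by
  by_cases hk : k ≤ p - 2
  · apply Submodule.subset_span
    exact Or.inr ⟨Sum.inl (m, ⟨k, by omega⟩), rfl⟩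
  · rw [theta_u_pow_zero p k (by omega), mul_zero]
    exact zero_mem _

lemma mem_a (hp3 : 3 ≤ p) (m k : ℕ) (i : Fin p) :
    thetaMu p ^ m * thetaU p ^ k * thetaA p i ∈ SpanS p := by
  by_cases hk3 : k ≤ p - 3
  · apply Submodule.subset_span
    exact Or.inr ⟨Sum.inr (Sum.inl (m, ⟨k, by omega⟩, i)), rfl⟩
  · by_cases hk2 : k = p - 2
    · by_cases hi : (i : ℕ) = p - 1
      · apply Submodule.subset_span
        refine Or.inl ⟨m, ?_⟩
        have hieq : i = ⟨p - 1, Nat.sub_lt (NeZero.pos p) Nat.one_pos⟩ := Fin.ext hi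
        rw [kerF, ← hieq, ← hk2]
      · have hile : (i : ℕ) ≤ p - 2 := by have := i.isLt; omega
        rw [hk2, mul_assoc, theta_ua p i hile, mul_zero]
        exact zero_mem _
    · rw [theta_u_pow_zero p k (by omega), mul_zero, zero_mul]
      exact zero_mem _

lemma mem_b (hp3 : 3 ≤ p) (m k : ℕ) (j : Fin p) (hj : 1 ≤ (j : ℕ)) :
    thetaMu p ^ m * thetaU p ^ k * thetaB p j ∈ SpanS p := by
  by_cases hk3 : k ≤ p - 3
  · apply Submodule.subset_span
    refine Or.inr ⟨Sum.inr (Sum.inr (m, ⟨k, by omega⟩, ⟨(j : ℕ) - 1, by have := j.isLt; omega⟩)), ?_⟩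
    show thetaMu p ^ m * thetaU p ^ k * thetaB p _ = _
    congr 1
    apply congrArg
    apply Fin.ext
    show (j : ℕ) - 1 + 1 = (j : ℕ)
    omega
  · have h1 : thetaU p ^ k = thetaU p ^ (k - (p - 2)) * thetaU p ^ (p - 2) := by
      rw [← pow_add]; congr 1; omega
    have hsplit : thetaMu p ^ m * thetaU p ^ k * thetaB p j =
        thetaMu p ^ m * thetaU p ^ (k - (p - 2)) * (thetaU p ^ (p - 2) * thetaB p j) := by
      rw [h1]; ring
    rw [hsplit, theta_ub p j hj, mul_zero]
    exact zero_mem _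


def genT : ThetaGen p → Theta p
  | ThetaGen.u => thetaU p
  | ThetaGen.mu => thetaMu p
  | ThetaGen.a i => thetaA p i
  | ThetaGen.b j => thetaB p j

lemma mk_X_eq_genT (v : ThetaGen p) :
    (Ideal.Quotient.mk (Ideal.span (thetaRels p)) (X v) : Theta p) = genT p v := by
  cases v <;> rfl

/-- product of an `a`-shape with `b_j`, `j ≥ 1`, stays in the span. -/
lemma shape_ab (hp3 : 3 ≤ p) (m k : ℕ) (i j : Fin p) (hj : 1 ≤ (j : ℕ)) :
    thetaMu p ^ m * thetaU p ^ k * (thetaA p i * thetaB p j) ∈ SpanS p := by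
  have hi' := i.isLt
  have hj' := j.isLt
  by_cases hij : (i : ℕ) + (j : ℕ) ≤ p - 1
  · rw [theta_ab_low p i j ⟨(i : ℕ) + (j : ℕ), by omega⟩ hj hij rfl,
      show thetaMu p ^ m * thetaU p ^ k * (thetaU p * thetaA p _) =
        thetaMu p ^ m * thetaU p ^ (k + 1) * thetaA p _ from by rw [pow_succ]; ring]
    exact mem_a p hp3 m (k + 1) _
  · rw [theta_ab_high p i j ⟨(i : ℕ) + (j : ℕ) - p, by omega⟩ hj (by omega) (by simp; omega),
      show thetaMu p ^ m * thetaU p ^ k * (thetaU p * thetaMu p * thetaA p _) =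
        thetaMu p ^ (m + 1) * thetaU p ^ (k + 1) * thetaA p _ from by
          rw [pow_succ, pow_succ]; ring]
    exact mem_a p hp3 (m + 1) (k + 1) _

lemma shape_pure_mul (hp3 : 3 ≤ p) (m k : ℕ) (v : ThetaGen p) :
    thetaMu p ^ m * thetaU p ^ k * genT p v ∈ SpanS p := by
  cases v with
  | u =>
    rw [show genT p ThetaGen.u = thetaU p from rfl,
      show thetaMu p ^ m * thetaU p ^ k * thetaU p = thetaMu p ^ m * thetaU p ^ (k + 1) from by
        rw [pow_succ]; ring]
    exact mem_pure p hp3 m (k + 1)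
  | mu =>
    rw [show genT p ThetaGen.mu = thetaMu p from rfl,
      show thetaMu p ^ m * thetaU p ^ k * thetaMu p = thetaMu p ^ (m + 1) * thetaU p ^ k from by
        rw [pow_succ]; ring]
    exact mem_pure p hp3 (m + 1) k
  | a i => exact mem_a p hp3 m k i
  | b j =>
    rw [show genT p (ThetaGen.b j) = thetaB p j from rfl]
    by_cases hj : 1 ≤ (j : ℕ)
    · exact mem_b p hp3 m k j hj
    · have hj0 : j = 0 := Fin.ext (by rw [Fin.val_zero]; omega)
      rw [hj0, theta_b0,
        show thetaMu p ^ m * thetaU p ^ k * thetaU p = thetaMu p ^ m * thetaU p ^ (k + 1) from by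
          rw [pow_succ]; ring]
      exact mem_pure p hp3 m (k + 1)

lemma shape_a_mul (hp3 : 3 ≤ p) (m k : ℕ) (i : Fin p) (v : ThetaGen p) :
    thetaMu p ^ m * thetaU p ^ k * thetaA p i * genT p v ∈ SpanS p := by
  cases v with
  | u =>
    rw [show thetaMu p ^ m * thetaU p ^ k * thetaA p i * genT p ThetaGen.u =
        thetaMu p ^ m * thetaU p ^ (k + 1) * thetaA p i from by
      rw [show genT p ThetaGen.u = thetaU p from rfl, pow_succ]; ring]
    exact mem_a p hp3 m (k + 1) i
  | mu =>
    rw [show thetaMu p ^ m * thetaU p ^ k * thetaA p i * genT p ThetaGen.mu =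
        thetaMu p ^ (m + 1) * thetaU p ^ k * thetaA p i from by
      rw [show genT p ThetaGen.mu = thetaMu p from rfl, pow_succ]; ring]
    exact mem_a p hp3 (m + 1) k i
  | a i' =>
    rw [show thetaMu p ^ m * thetaU p ^ k * thetaA p i * genT p (ThetaGen.a i') =
        thetaMu p ^ m * thetaU p ^ k * (thetaA p i * thetaA p i') from by
      rw [show genT p (ThetaGen.a i') = thetaA p i' from rfl]; ring]
    rw [theta_aa, mul_zero]
    exact zero_mem _
  | b j =>
    rw [show genT p (ThetaGen.b j) = thetaB p j from rfl]
    by_cases hj : 1 ≤ (j : ℕ)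
    · rw [mul_assoc]
      exact shape_ab p hp3 m k i j hj
    · have hj0 : j = 0 := Fin.ext (by rw [Fin.val_zero]; omega)
      rw [hj0, theta_b0,
        show thetaMu p ^ m * thetaU p ^ k * thetaA p i * thetaU p =
          thetaMu p ^ m * thetaU p ^ (k + 1) * thetaA p i from by rw [pow_succ]; ring]
      exact mem_a p hp3 m (k + 1) i

lemma shape_b_mul (hp3 : 3 ≤ p) (m k : ℕ) (j : Fin p) (hj : 1 ≤ (j : ℕ)) (v : ThetaGen p) :
    thetaMu p ^ m * thetaU p ^ k * thetaB p j * genT p v ∈ SpanS p := by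
  have hj' := j.isLt
  cases v with
  | u =>
    rw [show thetaMu p ^ m * thetaU p ^ k * thetaB p j * genT p ThetaGen.u =
        thetaMu p ^ m * thetaU p ^ (k + 1) * thetaB p j from by
      rw [show genT p ThetaGen.u = thetaU p from rfl, pow_succ]; ring]
    exact mem_b p hp3 m (k + 1) j hj
  | mu =>
    rw [show thetaMu p ^ m * thetaU p ^ k * thetaB p j * genT p ThetaGen.mu =
        thetaMu p ^ (m + 1) * thetaU p ^ k * thetaB p j from by
      rw [show genT p ThetaGen.mu = thetaMu p from rfl, pow_succ]; ring]
    exact mem_b p hp3 (m + 1) k j hj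
  | a i =>
    rw [show thetaMu p ^ m * thetaU p ^ k * thetaB p j * genT p (ThetaGen.a i) =
        thetaMu p ^ m * thetaU p ^ k * (thetaA p i * thetaB p j) from by
      rw [show genT p (ThetaGen.a i) = thetaA p i from rfl]; ring]
    exact shape_ab p hp3 m k i j hj
  | b j' =>
    rw [show genT p (ThetaGen.b j') = thetaB p j' from rfl]
    by_cases hj1 : 1 ≤ (j' : ℕ)
    · have hj1' := j'.isLt
      by_cases hjj : (j : ℕ) + (j' : ℕ) ≤ p - 1
      · rw [mul_assoc, theta_bb_low p j j' ⟨(j : ℕ) + (j' : ℕ), by omega⟩ hj hj1 hjj rfl,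
          show thetaMu p ^ m * thetaU p ^ k * (thetaU p * thetaB p _) =
            thetaMu p ^ m * thetaU p ^ (k + 1) * thetaB p _ from by rw [pow_succ]; ring]
        exact mem_b p hp3 m (k + 1) _ (by simp; omega)
      · by_cases hjp : (j : ℕ) + (j' : ℕ) = p
        · rw [mul_assoc, theta_bb_high p j j' ⟨0, by omega⟩ hj hj1 (by omega)
            (by simp; omega)]
          rw [show (⟨0, by omega⟩ : Fin p) = 0 from Fin.ext (by rw [Fin.val_zero])]
          rw [theta_b0,
            show thetaMu p ^ m * thetaU p ^ k * (thetaU p * thetaMu p * thetaU p) =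
              thetaMu p ^ (m + 1) * thetaU p ^ (k + 2) from by
                rw [pow_succ, pow_succ, pow_succ]; ring]
          exact mem_pure p hp3 (m + 1) (k + 2)
        · rw [mul_assoc, theta_bb_high p j j' ⟨(j : ℕ) + (j' : ℕ) - p, by omega⟩ hj hj1
            (by omega) (by simp; omega),
            show thetaMu p ^ m * thetaU p ^ k * (thetaU p * thetaMu p * thetaB p _) =
              thetaMu p ^ (m + 1) * thetaU p ^ (k + 1) * thetaB p _ from by
                rw [pow_succ, pow_succ]; ring]
          exact mem_b p hp3 (m + 1) (k + 1) _ (by simp; omega)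
    · have hj0 : j' = 0 := Fin.ext (by rw [Fin.val_zero]; omega)
      rw [hj0, theta_b0,
        show thetaMu p ^ m * thetaU p ^ k * thetaB p j * thetaU p =
          thetaMu p ^ m * thetaU p ^ (k + 1) * thetaB p j from by rw [pow_succ]; ring]
      exact mem_b p hp3 m (k + 1) j hj

lemma spanS_top (hp3 : 3 ≤ p) : SpanS p = ⊤ := by
  rw [eq_top_iff]
  rintro x -
  obtain ⟨f, rfl⟩ := Ideal.Quotient.mk_surjective x
  induction f using MvPolynomial.induction_on with
  | C a =>
    have h1 : (Ideal.Quotient.mk (Ideal.span (thetaRels p)) (C a) : Theta p) =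
        a • (1 : Theta p) := by
      rw [← Algebra.algebraMap_eq_smul_one]; rfl
    rw [h1]
    refine Submodule.smul_mem _ _ ?_
    have := mem_pure p hp3 0 0
    simpa using this
  | add f g hf hg => rw [map_add]; exact add_mem hf hg
  | mul_X f v hf =>
    rw [map_mul, mk_X_eq_genT]
    refine Submodule.span_induction ?_ ?_ ?_ ?_ hf
    · rintro y (⟨m, rfl⟩ | ⟨idx, rfl⟩)
      · exact shape_a_mul p hp3 m (p - 2) _ v
      · rcases idx with ⟨m, k⟩ | ⟨m, k, i⟩ | ⟨m, k, j⟩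
        · exact shape_pure_mul p hp3 m (k : ℕ) v
        · exact shape_a_mul p hp3 m (k : ℕ) i v
        · exact shape_b_mul p hp3 m (k : ℕ) _ (Nat.le_add_left 1 (j : ℕ)) v
    · show (0 : Theta p) * genT p v ∈ SpanS p
      rw [zero_mul]; exact zero_mem _
    · intro y z _ _ hy hz; show (y + z) * genT p v ∈ SpanS p; rw [add_mul]; exact add_mem hy hz
    · intro a y _ hy; show (a • y) * genT p v ∈ SpanS p; rw [smul_mul_assoc]; exact Submodule.smul_mem _ _ hy

/-! ### The image of the spanning family under `θ` -/

lemma theta_val_b {θ : Theta p →ₐ[ZMod p] KuAlg p} (hθ : thetaValues p θ) (j : Fin p) :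
    θ (thetaB p j) = kuU p * kuK p ^ (j : ℕ) := by
  by_cases hj : 1 ≤ (j : ℕ)
  · exact hθ.2.2.2 j hj
  · have hj0 : j = 0 := Fin.ext (by rw [Fin.val_zero]; omega)
    rw [hj0, theta_b0, hθ.1, Fin.val_zero, pow_zero, mul_one]

lemma ku_mono (a b c : ℕ) :
    (Ideal.Quotient.mk (kuRelIdeal p) (monomial (expo a b c) 1) : KuAlg p) =
      kuU p ^ a * kuD p ^ b * kuK p ^ c := by
  rw [← X_pow_mul_eq_monomial, map_mul, map_mul, map_pow, map_pow, map_pow]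
  rfl

def EIdx : RIdx p → (Fin 3 →₀ ℕ)
  | Sum.inl (m, k) => expo (k : ℕ) 0 (p * m)
  | Sum.inr (Sum.inl (m, k, i)) => expo ((k : ℕ) + 1) 1 (p * m + (i : ℕ))
  | Sum.inr (Sum.inr (m, k, j)) => expo ((k : ℕ) + 1) 0 (p * m + ((j : ℕ) + 1))

lemma pm_aux (m m' r r' : ℕ) (hr : r < p) (hr' : r' < p) (h : p * m + r = p * m' + r') :
    m = m' ∧ r = r' := by
  have hmm : m = m' := by
    rcases Nat.lt_trichotomy m m' with h1 | h1 | h1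
    · have e1 : p * (m + 1) ≤ p * m' := Nat.mul_le_mul_left p (by omega)
      rw [Nat.mul_succ] at e1; omega
    · exact h1
    · have e1 : p * (m' + 1) ≤ p * m := Nat.mul_le_mul_left p (by omega)
      rw [Nat.mul_succ] at e1; omega
  subst hmm
  exact ⟨rfl, by omega⟩

lemma EIdx_inj (hp3 : 3 ≤ p) : Function.Injective (EIdx p) := by
  rintro (⟨m, k⟩ | ⟨m, k, i⟩ | ⟨m, k, j⟩) (⟨m', k'⟩ | ⟨m', k', i'⟩ | ⟨m', k', j'⟩) h <;>
    simp only [EIdx] at h <;> obtain ⟨h0, h1, h2⟩ := expo_inj h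
  · obtain ⟨hm, -⟩ := pm_aux p m m' 0 0 (by omega) (by omega) (by omega)
    rw [hm, Fin.ext h0]
  · omega
  · obtain ⟨-, hr⟩ := pm_aux p m m' 0 ((j' : ℕ) + 1) (by omega)
      (by have := j'.isLt; omega) (by omega)
    omega
  · omega
  · obtain ⟨hm, hi⟩ := pm_aux p m m' (i : ℕ) (i' : ℕ) i.isLt i'.isLt h2
    rw [hm, Fin.ext (show (k : ℕ) = (k' : ℕ) from by omega), Fin.ext hi]
  · omega
  · obtain ⟨-, hr⟩ := pm_aux p m m' ((j : ℕ) + 1) 0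
      (by have := j.isLt; omega) (by omega) h2
    omega
  · omega
  · obtain ⟨hm, hj⟩ := pm_aux p m m' ((j : ℕ) + 1) ((j' : ℕ) + 1)
      (by have := j.isLt; omega) (by have := j'.isLt; omega) h2
    rw [hm, Fin.ext (show (k : ℕ) = (k' : ℕ) from by omega),
      Fin.ext (show (j : ℕ) = (j' : ℕ) from by omega)]

lemma theta_restV {θ : Theta p →ₐ[ZMod p] KuAlg p} (hθ : thetaValues p θ) (idx : RIdx p) :
    θ (restV p idx) = Ideal.Quotient.mk (kuRelIdeal p) (monomial (EIdx p idx) 1) := by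
  obtain ⟨hu, hmu, ha, hb⟩ := hθ
  rcases idx with ⟨m, k⟩ | ⟨m, k, i⟩ | ⟨m, k, j⟩
  · rw [restV, EIdx, map_mul, map_pow, map_pow, hu, hmu, ku_mono]
    rw [pow_zero, ← pow_mul]
    ring
  · rw [restV, EIdx, map_mul, map_mul, map_pow, map_pow, hu, hmu, ha i, ku_mono]
    rw [pow_one, ← pow_mul, pow_add, pow_succ]
    ring
  · rw [restV, EIdx, map_mul, map_mul, map_pow, map_pow, hu, hmu,
      theta_val_b p (⟨hu, hmu, ha, hb⟩ : thetaValues p θ) _, ku_mono]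
    rw [pow_zero, ← pow_mul, pow_add, pow_succ]
    ring

lemma theta_restV_indep {θ : Theta p →ₐ[ZMod p] KuAlg p} (hθ : thetaValues p θ)
    (hp3 : 3 ≤ p) : LinearIndependent (ZMod p) (⇑θ.toLinearMap ∘ restV p) := by
  have hfun : (⇑θ.toLinearMap ∘ restV p) = fun idx =>
      (Ideal.Quotient.mk (kuRelIdeal p) (monomial (EIdx p idx) 1) : KuAlg p) :=
    funext (theta_restV p hθ)
  rw [hfun]
  refine ku_monomial_linearIndependent p (EIdx p) (EIdx_inj p hp3) ?_ ?_
  · rintro (⟨m, k⟩ | ⟨m, k, i⟩ | ⟨m, k, j⟩) <;>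
      simp only [EIdx, expo_apply0]
    · have := k.isLt; omega
    · have := k.isLt; omega
    · have := k.isLt; omega
  · rintro (⟨m, k⟩ | ⟨m, k, i⟩ | ⟨m, k, j⟩) <;> simp only [EIdx, expo_apply1] <;> omega

lemma theta_kerF_zero {θ : Theta p →ₐ[ZMod p] KuAlg p} (hθ : thetaValues p θ)
    (hp3 : 3 ≤ p) (m : ℕ) : θ (kerF p m) = 0 := by
  obtain ⟨hu, hmu, ha, hb⟩ := hθ
  rw [kerF, map_mul, map_mul, map_pow, map_pow, hu, hmu, ha]
  have : (kuK p ^ p) ^ m * kuU p ^ (p - 2) * (kuU p * kuD p * kuK p ^ (p - 1 : ℕ)) =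
      (kuK p ^ p) ^ m * kuD p * kuK p ^ (p - 1 : ℕ) * (kuU p ^ (p - 2) * kuU p) := by
    ring
  rw [show ((⟨p - 1, Nat.sub_lt (NeZero.pos p) Nat.one_pos⟩ : Fin p) : ℕ) = p - 1 from rfl,
    this, ← pow_succ, show p - 2 + 1 = p - 1 from by omega, ku_u_pow, mul_zero]

lemma ker_eq {θ : Theta p →ₐ[ZMod p] KuAlg p} (hθ : thetaValues p θ) (hp3 : 3 ≤ p) :
    Submodule.span (ZMod p) (Set.range (kerF p)) = LinearMap.ker θ.toLinearMap := by
  apply le_antisymm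
  · rw [Submodule.span_le]
    rintro y ⟨m, rfl⟩
    exact LinearMap.mem_ker.mpr (theta_kerF_zero p hθ hp3 m)
  · intro x hx
    have hx' : x ∈ SpanS p := by rw [spanS_top p hp3]; trivial
    rw [SpanS, Submodule.span_union] at hx'
    obtain ⟨y, hy, z, hz, rfl⟩ := Submodule.mem_sup.mp hx'
    have hθy : θ y = 0 := by
      have hle : Submodule.span (ZMod p) (Set.range (kerF p)) ≤
          LinearMap.ker θ.toLinearMap := by
        rw [Submodule.span_le]
        rintro w ⟨m, rfl⟩
        exact LinearMap.mem_ker.mpr (theta_kerF_zero p hθ hp3 m)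
      exact LinearMap.mem_ker.mp (hle hy)
    have hθz : θ z = 0 := by
      have h0 : θ (y + z) = 0 := LinearMap.mem_ker.mp hx
      rw [map_add, hθy, zero_add] at h0
      exact h0
    obtain ⟨c, hc⟩ := Finsupp.mem_span_range_iff_exists_finsupp.mp hz
    have hz0 : z = 0 := by
      have hlc : Finsupp.linearCombination (ZMod p) (⇑θ.toLinearMap ∘ restV p) c = 0 := by
        rw [← Finsupp.apply_linearCombination]
        rw [show Finsupp.linearCombination (ZMod p) (restV p) c = z from by
          rw [Finsupp.linearCombination_apply]; exact hc]
        exact hθz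
      have := theta_restV_indep p hθ hp3
        (hlc.trans (map_zero (Finsupp.linearCombination (ZMod p) (⇑θ.toLinearMap ∘ restV p))).symm)
      rw [← hc, this, Finsupp.sum_zero_index]
    rw [hz0, add_zero]
    exact hy

/-! ### Existence and uniqueness of `θ` -/

def thetaVal : ThetaGen p → KuAlg p
  | ThetaGen.u => kuU p
  | ThetaGen.mu => kuK p ^ p
  | ThetaGen.a i => kuU p * kuD p * kuK p ^ (i : ℕ)
  | ThetaGen.b j => kuU p * kuK p ^ (j : ℕ)

lemma thetaVal_rels (hp3 : 3 ≤ p) :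
    ∀ r ∈ Ideal.span (thetaRels p), aeval (thetaVal p) r = 0 := by
  have key : ∀ r ∈ thetaRels p, aeval (thetaVal p) r = 0 := by
    rintro r (rfl | rfl | ⟨i, hi, rfl⟩ | ⟨j, hj, rfl⟩ | ⟨i, j, k, hi, hj, hs, hk, rfl⟩ |
      ⟨i, j, k, hj, hs, hk, rfl⟩ | ⟨i, j, k, hi, hj, hs, hk, rfl⟩ |
      ⟨i, j, k, hj, hs, hk, rfl⟩ | ⟨i, j, rfl⟩) <;>
      simp only [map_sub, map_mul, map_pow, aeval_X, thetaVal]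
    · rw [Fin.val_zero, pow_zero, mul_one, sub_self]
    · exact ku_u_pow p
    · rw [show kuU p ^ (p - 2) * (kuU p * kuD p * kuK p ^ (i : ℕ)) =
        kuD p * kuK p ^ (i : ℕ) * (kuU p ^ (p - 2) * kuU p) from by ring,
        ← pow_succ, show p - 2 + 1 = p - 1 from by omega, ku_u_pow, mul_zero]
    · rw [show kuU p ^ (p - 2) * (kuU p * kuK p ^ (j : ℕ)) =
        kuK p ^ (j : ℕ) * (kuU p ^ (p - 2) * kuU p) from by ring,
        ← pow_succ, show p - 2 + 1 = p - 1 from by omega, ku_u_pow, mul_zero]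
    · rw [sub_eq_zero, hk, pow_add]; ring
    · rw [sub_eq_zero, hk, pow_add]; ring
    · rw [sub_eq_zero]
      calc kuU p * kuK p ^ (i : ℕ) * (kuU p * kuK p ^ (j : ℕ))
          = kuU p ^ 2 * kuK p ^ ((i : ℕ) + (j : ℕ)) := by rw [pow_add]; ring
        _ = kuU p ^ 2 * kuK p ^ ((k : ℕ) + p) := by rw [hk]
        _ = kuU p * kuK p ^ p * (kuU p * kuK p ^ (k : ℕ)) := by rw [pow_add]; ring
    · rw [sub_eq_zero]
      calc kuU p * kuD p * kuK p ^ (i : ℕ) * (kuU p * kuK p ^ (j : ℕ))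
          = kuU p ^ 2 * kuD p * kuK p ^ ((i : ℕ) + (j : ℕ)) := by rw [pow_add]; ring
        _ = kuU p ^ 2 * kuD p * kuK p ^ ((k : ℕ) + p) := by rw [hk]
        _ = kuU p * kuK p ^ p * (kuU p * kuD p * kuK p ^ (k : ℕ)) := by rw [pow_add]; ring
    · rw [show kuU p * kuD p * kuK p ^ (i : ℕ) * (kuU p * kuD p * kuK p ^ (j : ℕ)) =
        kuU p ^ 2 * kuK p ^ (i : ℕ) * kuK p ^ (j : ℕ) * kuD p ^ 2 from by ring,
        ku_d_sq, mul_zero]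
  intro r hr
  refine Submodule.span_induction key ?_ ?_ ?_ hr
  · rw [map_zero]
  · intro x y _ _ hx hy; rw [map_add, hx, hy, add_zero]
  · intro a x _ hx; rw [smul_eq_mul, map_mul, hx, mul_zero]

def theta0 (hp3 : 3 ≤ p) : Theta p →ₐ[ZMod p] KuAlg p :=
  Ideal.Quotient.liftₐ (Ideal.span (thetaRels p)) (aeval (thetaVal p)) (thetaVal_rels p hp3)

lemma theta0_mk (hp3 : 3 ≤ p) (f : MvPolynomial (ThetaGen p) (ZMod p)) :
    theta0 p hp3 (Ideal.Quotient.mk (Ideal.span (thetaRels p)) f) = aeval (thetaVal p) f :=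
  Ideal.Quotient.lift_mk (Ideal.span (thetaRels p)) _ _

lemma theta0_values (hp3 : 3 ≤ p) : thetaValues p (theta0 p hp3) := by
  refine ⟨?_, ?_, ?_, ?_⟩
  · rw [thetaU, theta0_mk, aeval_X]; rfl
  · rw [thetaMu, theta0_mk, aeval_X]; rfl
  · intro i; rw [thetaA, theta0_mk, aeval_X]; rfl
  · intro j _; rw [thetaB, theta0_mk, aeval_X]; rfl

lemma theta_unique (θ₁ θ₂ : Theta p →ₐ[ZMod p] KuAlg p)
    (h₁ : thetaValues p θ₁) (h₂ : thetaValues p θ₂) : θ₁ = θ₂ := by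
  apply Ideal.Quotient.algHom_ext
  apply MvPolynomial.algHom_ext
  intro v
  show θ₁ (Ideal.Quotient.mk (Ideal.span (thetaRels p)) (X v)) =
    θ₂ (Ideal.Quotient.mk (Ideal.span (thetaRels p)) (X v))
  rw [mk_X_eq_genT]
  cases v with
  | u => rw [show genT p ThetaGen.u = thetaU p from rfl, h₁.1, h₂.1]
  | mu => rw [show genT p ThetaGen.mu = thetaMu p from rfl, h₁.2.1, h₂.2.1]
  | a i => rw [show genT p (ThetaGen.a i) = thetaA p i from rfl, h₁.2.2.1 i, h₂.2.2.1 i]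
  | b j =>
    rw [show genT p (ThetaGen.b j) = thetaB p j from rfl, theta_val_b p h₁ j, theta_val_b p h₂ j]

/-! ### The image of `θ` -/

lemma base_uk {θ : Theta p →ₐ[ZMod p] KuAlg p} (hθ : thetaValues p θ) (c : ℕ) :
    kuU p * kuK p ^ c ∈ Set.range θ := by
  have hp0 : 0 < p := NeZero.pos p
  by_cases hc : c % p = 0
  · refine ⟨thetaMu p ^ (c / p) * thetaU p, ?_⟩
    rw [map_mul, map_pow, hθ.2.1, hθ.1, ← pow_mul, Nat.mul_div_cancel' (Nat.dvd_of_mod_eq_zero hc)]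
    ring
  · refine ⟨thetaMu p ^ (c / p) * thetaB p ⟨c % p, Nat.mod_lt c hp0⟩, ?_⟩
    rw [map_mul, map_pow, hθ.2.1, hθ.2.2.2 _ (by show 1 ≤ c % p; omega), ← pow_mul]
    show (kuK p) ^ (p * (c / p)) * (kuU p * kuK p ^ (c % p)) = kuU p * kuK p ^ c
    rw [show kuK p ^ (p * (c / p)) * (kuU p * kuK p ^ (c % p)) =
      kuU p * (kuK p ^ (p * (c / p)) * kuK p ^ (c % p)) from by ring, ← pow_add,
      Nat.div_add_mod c p]
  
lemma base_udk {θ : Theta p →ₐ[ZMod p] KuAlg p} (hθ : thetaValues p θ) (c : ℕ) :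
    kuU p * kuD p * kuK p ^ c ∈ Set.range θ := by
  have hp0 : 0 < p := NeZero.pos p
  refine ⟨thetaMu p ^ (c / p) * thetaA p ⟨c % p, Nat.mod_lt c hp0⟩, ?_⟩
  rw [map_mul, map_pow, hθ.2.1, hθ.2.2.1, ← pow_mul]
  show (kuK p) ^ (p * (c / p)) * (kuU p * kuD p * kuK p ^ (c % p)) = kuU p * kuD p * kuK p ^ c
  rw [show kuK p ^ (p * (c / p)) * (kuU p * kuD p * kuK p ^ (c % p)) =
    kuU p * kuD p * (kuK p ^ (p * (c / p)) * kuK p ^ (c % p)) from by ring, ← pow_add,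
    Nat.div_add_mod c p]

def mkK : MvPolynomial (Fin 3) (ZMod p) →ₐ[ZMod p] KuAlg p :=
  Ideal.Quotient.mkₐ (ZMod p) (kuRelIdeal p)

lemma ideal_le_range {θ : Theta p →ₐ[ZMod p] KuAlg p} (hθ : thetaValues p θ)
    {x : KuAlg p} (hx : x ∈ Ideal.span {kuU p}) : x ∈ Set.range θ := by
  obtain ⟨r, rfl⟩ := Ideal.mem_span_singleton.mp hx
  suffices h : ∀ f : MvPolynomial (Fin 3) (ZMod p), ∀ c : ℕ,
      (mkK p f * kuU p * kuK p ^ c ∈ Set.range θ) ∧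
      (mkK p f * kuU p * kuD p * kuK p ^ c ∈ Set.range θ) by
    obtain ⟨f, rfl⟩ := Ideal.Quotient.mkₐ_surjective (ZMod p) (I := kuRelIdeal p) r
    have := (h f 0).1
    rw [pow_zero, mul_one] at this
    convert this using 1
    exact mul_comm _ _
  intro f
  induction f using MvPolynomial.induction_on with
  | C a =>
    intro c
    constructor
    · obtain ⟨t, ht⟩ := base_uk p hθ c
      refine ⟨a • t, ?_⟩
      rw [map_smul, ht, Algebra.smul_def]
      rw [show mkK p (C a) = algebraMap (ZMod p) (KuAlg p) a from rfl]
      ring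
    · obtain ⟨t, ht⟩ := base_udk p hθ c
      refine ⟨a • t, ?_⟩
      rw [map_smul, ht, Algebra.smul_def]
      rw [show mkK p (C a) = algebraMap (ZMod p) (KuAlg p) a from rfl]
      ring
  | add f g hf hg =>
    intro c
    constructor
    · obtain ⟨t1, ht1⟩ := (hf c).1
      obtain ⟨t2, ht2⟩ := (hg c).1
      exact ⟨t1 + t2, by rw [map_add, ht1, ht2, map_add]; ring⟩
    · obtain ⟨t1, ht1⟩ := (hf c).2
      obtain ⟨t2, ht2⟩ := (hg c).2
      exact ⟨t1 + t2, by rw [map_add, ht1, ht2, map_add]; ring⟩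
  | mul_X f v hf =>
    intro c
    fin_cases v
    · constructor
      · show mkK p (f * X 0) * kuU p * kuK p ^ c ∈ Set.range ⇑θ
        obtain ⟨t, ht⟩ := (hf c).1
        refine ⟨t * thetaU p, ?_⟩
        rw [map_mul, ht, hθ.1, map_mul]
        rw [show mkK p (X 0) = kuU p from rfl]
        ring
      · show mkK p (f * X 0) * kuU p * kuD p * kuK p ^ c ∈ Set.range ⇑θ
        obtain ⟨t, ht⟩ := (hf c).2
        refine ⟨t * thetaU p, ?_⟩
        rw [map_mul, ht, hθ.1, map_mul]
        rw [show mkK p (X 0) = kuU p from rfl]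
        ring
    · constructor
      · show mkK p (f * X 1) * kuU p * kuK p ^ c ∈ Set.range ⇑θ
        obtain ⟨t, ht⟩ := (hf c).2
        refine ⟨t, ?_⟩
        rw [ht, map_mul]
        rw [show mkK p (X 1) = kuD p from rfl]
        ring
      · show mkK p (f * X 1) * kuU p * kuD p * kuK p ^ c ∈ Set.range ⇑θ
        refine ⟨0, ?_⟩
        rw [map_zero, map_mul]
        rw [show mkK p (X 1) = kuD p from rfl]
        rw [show mkK p f * kuD p * kuU p * kuD p * kuK p ^ c =
          mkK p f * kuU p * kuK p ^ c * kuD p ^ 2 from by ring,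
          ku_d_sq, mul_zero]
    · constructor
      · show mkK p (f * X 2) * kuU p * kuK p ^ c ∈ Set.range ⇑θ
        obtain ⟨t, ht⟩ := (hf (c + 1)).1
        refine ⟨t, ?_⟩
        rw [ht, map_mul]
        rw [show mkK p (X 2) = kuK p from rfl, pow_succ]
        ring
      · show mkK p (f * X 2) * kuU p * kuD p * kuK p ^ c ∈ Set.range ⇑θ
        obtain ⟨t, ht⟩ := (hf (c + 1)).2
        refine ⟨t, ?_⟩
        rw [ht, map_mul]
        rw [show mkK p (X 2) = kuK p from rfl, pow_succ]
        ring

lemma range_eq {θ : Theta p →ₐ[ZMod p] KuAlg p} (hθ : thetaValues p θ) (hp3 : 3 ≤ p) :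
    LinearMap.range θ.toLinearMap =
      Subalgebra.toSubmodule (Algebra.adjoin (ZMod p) {kuK p ^ p}) ⊔
        Submodule.restrictScalars (ZMod p) (Ideal.span {kuU p}) := by
  apply le_antisymm
  · rintro x ⟨y, rfl⟩
    show θ y ∈ _
    obtain ⟨f, rfl⟩ := Ideal.Quotient.mk_surjective y
    induction f using MvPolynomial.induction_on with
    | C a =>
      have h1 : (Ideal.Quotient.mk (Ideal.span (thetaRels p)) (C a) : Theta p) =
          a • (1 : Theta p) := by rw [← Algebra.algebraMap_eq_smul_one]; rfl
      rw [h1, map_smul, map_one]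
      refine Submodule.smul_mem _ _ (Submodule.mem_sup_left ?_)
      exact Subalgebra.one_mem _
    | add f g hf hg =>
      rw [map_add, show θ (Ideal.Quotient.mk (Ideal.span (thetaRels p)) f +
          Ideal.Quotient.mk (Ideal.span (thetaRels p)) g) =
        θ (Ideal.Quotient.mk (Ideal.span (thetaRels p)) f) +
          θ (Ideal.Quotient.mk (Ideal.span (thetaRels p)) g) from map_add θ _ _]
      exact add_mem hf hg
    | mul_X f v hf =>
      rw [map_mul, show θ (Ideal.Quotient.mk (Ideal.span (thetaRels p)) f *
          Ideal.Quotient.mk (Ideal.span (thetaRels p)) (X v)) =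
        θ (Ideal.Quotient.mk (Ideal.span (thetaRels p)) f) *
          θ (Ideal.Quotient.mk (Ideal.span (thetaRels p)) (X v)) from map_mul θ _ _, mk_X_eq_genT]
      -- need: x ∈ sup → x * θ (genT v) ∈ sup
      have hmulA : ∀ x ∈ Subalgebra.toSubmodule (Algebra.adjoin (ZMod p) {kuK p ^ p}) ⊔
          Submodule.restrictScalars (ZMod p) (Ideal.span {kuU p}),
          ∀ g ∈ Algebra.adjoin (ZMod p) {kuK p ^ p},
          x * g ∈ Subalgebra.toSubmodule (Algebra.adjoin (ZMod p) {kuK p ^ p}) ⊔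
            Submodule.restrictScalars (ZMod p) (Ideal.span {kuU p}) := by
        intro x hx g hg
        obtain ⟨a, ha, b, hb, rfl⟩ := Submodule.mem_sup.mp hx
        rw [add_mul]
        refine add_mem (Submodule.mem_sup_left ?_) (Submodule.mem_sup_right ?_)
        · exact (Subalgebra.mem_toSubmodule _).mpr
            (mul_mem ((Subalgebra.mem_toSubmodule _).mp ha) hg)
        · exact Ideal.mul_mem_right _ _ hb
      have hmulI : ∀ x : KuAlg p, ∀ g ∈ Ideal.span {kuU p},
          x * g ∈ Subalgebra.toSubmodule (Algebra.adjoin (ZMod p) {kuK p ^ p}) ⊔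
            Submodule.restrictScalars (ZMod p) (Ideal.span {kuU p}) :=
        fun x g hg => Submodule.mem_sup_right (Ideal.mul_mem_left _ _ hg)
      cases v with
      | u =>
        refine hmulI _ _ ?_
        rw [show genT p ThetaGen.u = thetaU p from rfl, hθ.1]
        exact Ideal.subset_span rfl
      | mu =>
        refine hmulA _ hf _ ?_
        rw [show genT p ThetaGen.mu = thetaMu p from rfl, hθ.2.1]
        exact Algebra.subset_adjoin rfl
      | a i =>
        refine hmulI _ _ ?_
        rw [show genT p (ThetaGen.a i) = thetaA p i from rfl, hθ.2.2.1 i]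
        exact Ideal.mem_span_singleton.mpr ⟨kuD p * kuK p ^ (i : ℕ), by ring⟩
      | b j =>
        refine hmulI _ _ ?_
        rw [show genT p (ThetaGen.b j) = thetaB p j from rfl, theta_val_b p hθ j]
        exact Ideal.mem_span_singleton.mpr ⟨kuK p ^ (j : ℕ), by ring⟩
  · rw [sup_le_iff]
    constructor
    · intro x hx
      have hx' : x ∈ Algebra.adjoin (ZMod p) {kuK p ^ p} := hx
      rw [Algebra.adjoin_singleton_eq_range_aeval] at hx'
      obtain ⟨q, hq⟩ := hx'
      have hq' : Polynomial.aeval (kuK p ^ p) q = x := hq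
      refine ⟨Polynomial.aeval (thetaMu p) q, ?_⟩
      show θ (Polynomial.aeval (thetaMu p) q) = x
      rw [← Polynomial.aeval_algHom_apply, hθ.2.1]
      exact hq' 
    · intro x hx
      obtain ⟨t, ht⟩ := ideal_le_range p hθ hx
      exact ⟨t, ht⟩

/-! ### Directness of the sum -/

def psi (hp3 : 3 ≤ p) : KuAlg p →ₐ[ZMod p] Polynomial (ZMod p) :=
  Ideal.Quotient.liftₐ (kuRelIdeal p) (aeval ![0, 0, Polynomial.X]) (by
    intro a ha
    refine Submodule.span_induction ?_ ?_ ?_ ?_ ha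
    · rintro x (rfl | rfl) <;> rw [map_pow, aeval_X]
      · show (![0, 0, Polynomial.X] 0 : Polynomial (ZMod p)) ^ (p - 1) = 0
        rw [show (![0, 0, Polynomial.X] 0 : Polynomial (ZMod p)) = 0 from rfl]
        exact zero_pow (by omega)
      · show (![0, 0, Polynomial.X] 1 : Polynomial (ZMod p)) ^ 2 = 0
        rw [show (![0, 0, Polynomial.X] 1 : Polynomial (ZMod p)) = 0 from rfl]
        exact zero_pow (by omega)
    · rw [map_zero]
    · intro x y _ _ hx hy; rw [map_add, hx, hy, add_zero]
    · intro r x _ hx; rw [smul_eq_mul, map_mul, hx, mul_zero])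

lemma psi_mk (hp3 : 3 ≤ p) (f : MvPolynomial (Fin 3) (ZMod p)) :
    psi p hp3 (Ideal.Quotient.mk (kuRelIdeal p) f) = aeval ![0, 0, Polynomial.X] f :=
  Ideal.Quotient.lift_mk (kuRelIdeal p) _ _

lemma inf_eq_bot (hp : p.Prime) (hp3 : 3 ≤ p) :
    Subalgebra.toSubmodule (Algebra.adjoin (ZMod p) {kuK p ^ p}) ⊓
      Submodule.restrictScalars (ZMod p) (Ideal.span {kuU p}) = ⊥ := by
  haveI : Fact p.Prime := ⟨hp⟩
  rw [eq_bot_iff]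
  intro x hx
  obtain ⟨hxA, hxI⟩ := Submodule.mem_inf.mp hx
  have hxA' : x ∈ Algebra.adjoin (ZMod p) {kuK p ^ p} := hxA
  rw [Algebra.adjoin_singleton_eq_range_aeval] at hxA'
  obtain ⟨q, hq0⟩ := hxA'
  have hq : Polynomial.aeval (kuK p ^ p) q = x := hq0
  obtain ⟨r, hr⟩ := Ideal.mem_span_singleton.mp hxI
  have hpsiu : psi p hp3 (kuU p) = 0 := by
    rw [kuU, psi_mk, aeval_X]; rfl
  have hpsix : psi p hp3 x = 0 := by
    rw [hr, map_mul, hpsiu, zero_mul]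
  have hpsik : psi p hp3 (kuK p) = Polynomial.X := by
    rw [kuK, psi_mk, aeval_X]; rfl
  have hcomp : q.comp (Polynomial.X ^ p) = 0 := by
    rw [Polynomial.comp_eq_aeval]
    have := Polynomial.aeval_algHom_apply (psi p hp3) (kuK p ^ p) q
    rw [hq, hpsix, map_pow, hpsik] at this
    exact this
  have hq0 : q = 0 := by
    rcases Polynomial.comp_eq_zero_iff.mp hcomp with h | ⟨-, h⟩
    · exact h
    · exfalso
      have := congrArg Polynomial.natDegree h
      rw [Polynomial.natDegree_X_pow, Polynomial.natDegree_C] at this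
      omega
  rw [Submodule.mem_bot, ← hq, hq0, map_zero]

end S5

/-- For `p ≥ 3` prime there is a unique `F_p`-algebra homomorphism
`θ : Θ → R` with `θ(u) = u`, `θ(μ) = κ^p`, `θ(a_i) = u·δ·κ^i` and `θ(b_j) = u·κ^j`.
Its image is `F_p[κ^p] + u·R`, and this sum is direct; its kernel is the free
`F_p[μ]`-submodule of `Θ` generated by `u^{p-2}·a_{p-1}`. -/
theorem statement5 (p : ℕ) [NeZero p] (hp : p.Prime) (hp3 : 3 ≤ p) :
    (∃! θ : Theta p →ₐ[ZMod p] KuAlg p, thetaValues p θ) ∧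
    ∀ θ : Theta p →ₐ[ZMod p] KuAlg p, thetaValues p θ →
      -- the image is F_p[κ^p] + u·R ...
      (LinearMap.range θ.toLinearMap =
        Subalgebra.toSubmodule (Algebra.adjoin (ZMod p) {kuK p ^ p}) ⊔
          Submodule.restrictScalars (ZMod p) (Ideal.span {kuU p})) ∧
      -- ... and the sum is direct
      (Subalgebra.toSubmodule (Algebra.adjoin (ZMod p) {kuK p ^ p}) ⊓
          Submodule.restrictScalars (ZMod p) (Ideal.span {kuU p}) = ⊥) ∧
      -- the elements μ^m·u^{p-2}·a_{p-1} are linearly independent ...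
      LinearIndependent (ZMod p)
        (fun m : ℕ => thetaMu p ^ m * thetaU p ^ (p - 2) * thetaA p ⟨p - 1, by omega⟩) ∧
      -- ... and span the kernel of θ
      Submodule.span (ZMod p)
          (Set.range (fun m : ℕ =>
            thetaMu p ^ m * thetaU p ^ (p - 2) * thetaA p ⟨p - 1, by omega⟩)) =
        LinearMap.ker θ.toLinearMap := by
  constructor
  · exact ⟨S5.theta0 p hp3, S5.theta0_values p hp3,
      fun θ hθ => S5.theta_unique p θ (S5.theta0 p hp3) hθ (S5.theta0_values p hp3)⟩
  · intro θ hθ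
    exact ⟨S5.range_eq p hθ hp3, S5.inf_eq_bot p hp hp3,
      S5.kerF_linearIndependent p hp3, S5.ker_eq p hθ hp3⟩
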